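/- For d = 2 and all β > 0, μ_t(β) = (a/(4πβ)) ((1+C₂) log(1+C₂) - C₂ log C₂), where C₂ = (4π/a)((a-b)/b). -/

import Mathlib

open Real Set

lemma key_ineq (Cc t : ℝ) (hC : 0 < Cc) (ht0 : 0 < t) (ht1 : t < 1) :
    Real.log (1 + Cc) + Cc * (Real.log (1 + Cc) - Real.log Cc)
      ≤ -Real.log (1 - t) - Cc * Real.log t := by
  have h1t : (0:ℝ) < 1 - t := by linarith
  have h1C : (0:ℝ) < 1 + Cc := by linarith
  have h1 : Real.log ((1 - t) * (1 + Cc)) ≤ (1 - t) * (1 + Cc) - 1 :=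
    Real.log_le_sub_one_of_pos (mul_pos h1t h1C)
  have h2 : Real.log (t * (1 + Cc) / Cc) ≤ t * (1 + Cc) / Cc - 1 :=
    Real.log_le_sub_one_of_pos (div_pos (mul_pos ht0 h1C) hC)
  rw [Real.log_mul h1t.ne' h1C.ne'] at h1
  rw [Real.log_div (mul_pos ht0 h1C).ne' hC.ne', Real.log_mul ht0.ne' h1C.ne'] at h2
  have h3 := mul_le_mul_of_nonneg_left h2 hC.le
  have h4 : Cc * (t * (1 + Cc) / Cc) = t * (1 + Cc) := by field_simp
  nlinarith [h1, h3, h4]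

/-- For `d = 2` and all `β > 0`,
`μ_t(β) = (a/(4πβ)) ((1+C₂) log(1+C₂) - C₂ log C₂)` with `C₂ = (4π/a)((a-b)/b)`,
where `μ_t(β) = inf_{s<0} {a ∂p₀/∂α(β,s) - ((a-b)/b) s}` and in `d = 2`
`∂p₀/∂α(β,s) = (4πβ)⁻¹ g(βs,1) = -(4πβ)⁻¹ log(1 - e^{βs})`. -/
theorem stmt_15 (β a b : ℝ) (hβ : 0 < β) (hb : 0 < b) (hab : b < a)
    (C : ℝ) (hC : C = (4 * π / a) * ((a - b) / b)) :
    sInf {v : ℝ | ∃ s < (0 : ℝ),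
        v = a * ((4 * π * β)⁻¹ * (-Real.log (1 - Real.exp (β * s)))) - (a - b) / b * s}
      = a / (4 * π * β) * ((1 + C) * Real.log (1 + C) - C * Real.log C) := by
  have ha : 0 < a := lt_trans hb hab
  have hπ : 0 < π := Real.pi_pos
  have hC0 : 0 < C := by
    rw [hC]
    have : 0 < (a - b) / b := div_pos (by linarith) hb
    positivity
  have h1C : (0:ℝ) < 1 + C := by linarith
  have hcb : (a - b) / b = a * C / (4 * π) := by
    rw [hC]; field_simp
  set V : ℝ := a / (4 * π * β) * ((1 + C) * Real.log (1 + C) - C * Real.log C) with hV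
  set S : Set ℝ := {v : ℝ | ∃ s < (0 : ℝ),
        v = a * ((4 * π * β)⁻¹ * (-Real.log (1 - Real.exp (β * s)))) - (a - b) / b * s}
  -- lower bound
  have hlb : ∀ v ∈ S, V ≤ v := by
    rintro v ⟨s, hs, rfl⟩
    have ht0 : 0 < Real.exp (β * s) := Real.exp_pos _
    have ht1 : Real.exp (β * s) < 1 := by
      rw [Real.exp_lt_one_iff]
      exact mul_neg_of_pos_of_neg hβ hs
    have hk := key_ineq C (Real.exp (β * s)) hC0 ht0 ht1
    rw [Real.log_exp] at hk
    have hA : 0 < a / (4 * π * β) := by positivity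
    have := mul_le_mul_of_nonneg_left hk hA.le
    calc V ≤ a / (4 * π * β) * (-Real.log (1 - Real.exp (β * s)) - C * (β * s)) := by
            rw [hV]; nlinarith [this]
      _ = a * ((4 * π * β)⁻¹ * (-Real.log (1 - Real.exp (β * s)))) - (a - b) / b * s := by
            rw [hcb]; field_simp
  -- membership
  have hmem : V ∈ S := by
    refine ⟨Real.log (C / (1 + C)) / β, ?_, ?_⟩
    · apply div_neg_of_neg_of_pos _ hβ
      apply Real.log_neg (div_pos hC0 h1C)
      rw [div_lt_one h1C]; linarith
    · have hβs : β * (Real.log (C / (1 + C)) / β) = Real.log (C / (1 + C)) := by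
        field_simp
      rw [hβs, Real.exp_log (div_pos hC0 h1C)]
      have h1 : 1 - C / (1 + C) = 1 / (1 + C) := by field_simp; ring
      rw [h1, Real.log_div one_ne_zero h1C.ne', Real.log_one,
        Real.log_div hC0.ne' h1C.ne', hcb, hV]
      field_simp
      ring
  exact le_antisymm (csInf_le ⟨V, hlb⟩ hmem) (le_csInf ⟨V, hmem⟩ hlb)
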